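/- Let $P_{XY}$ be a joint probability mass function on $\mathcal{X}\times\mathcal{Y}$ with $|\mathcal{X}|=M$ finite and $\mathcal{Y}$ finite, let $\mathcal{L}\colon\mathcal{Y}\to\binom{\mathcal{X}}{L}$ be a fixed-size list decoder with $1\le L<M$, and let $P_{\mathcal{L}}=\mathbb{P}[X\notin\mathcal{L}(Y)]$. Let $f\colon(0,\infty)\to\mathbb{R}$ be convex with $f(1)=0$ and twice differentiable, and suppose there exists a constant $m_f>0$ such that $f''(t)\ge m_f$ for all $t\in[\xi_1^*,\xi_2^*]\cap(0,\infty)$, where $\xi_1^*=M\inf_{(x,y)}P_{X|Y}(x|y)$ and $\xi_2^*=M\sup_{(x,y)}P_{X|Y}(x|y)$. Then $\mathbb{E}\bigl[D_f(P_{X|Y}(\cdot|Y)\,\|\,U_M)\bigr]\;\ge\;\frac{L}{M}\,f\!\left(\frac{M(1-P_{\mathcal{L}})}{L}\right)+\left(1-\frac{L}{M}\right)f\!\left(\frac{M P_{\mathcal{L}}}{M-L}\right)+\tfrac12 m_f M\left(\mathbb{E}[P_{X|Y}(X|Y)]-\frac{1-P_{\mathcal{L}}}{L}-\frac{P_{\mathcal{L}}}{M-L}\right)^{+}$,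 where $u^+=\max\{u,0\}$. -/

import Mathlib

open scoped BigOperators
open Set Filter

private lemma fano_tangent_pos {f : ℝ → ℝ}
    (hd1 : ∀ t ∈ Set.Ioi (0 : ℝ), DifferentiableAt ℝ f t)
    (hd2 : ∀ t ∈ Set.Ioi (0 : ℝ), DifferentiableAt ℝ (deriv f) t)
    {ξ₁ ξ₂ mf : ℝ}
    (hf'' : ∀ t ∈ Set.Icc ξ₁ ξ₂ ∩ Set.Ioi 0, mf ≤ deriv (deriv f) t)
    {a t : ℝ} (ha : a ∈ Set.Icc ξ₁ ξ₂) (ha0 : 0 < a)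
    (ht : t ∈ Set.Icc ξ₁ ξ₂) (ht0 : 0 < t) :
    f a + deriv f a * (t - a) + mf / 2 * (t - a) ^ 2 ≤ f t := by
  set φ : ℝ → ℝ := fun u => deriv f u - mf * u with hφ
  set ψ : ℝ → ℝ := fun s => f s - (f a + deriv f a * (s - a) + mf / 2 * (s - a) ^ 2) with hψ
  have hψder : ∀ s ∈ Set.Ioi (0 : ℝ), HasDerivAt ψ (φ s - φ a) s := by
    intro s hs
    have h1 : HasDerivAt (fun s : ℝ => s - a) 1 s := (hasDerivAt_id s).sub_const a
    have h2 : HasDerivAt (fun s : ℝ => (s - a) ^ 2) (2 * (s - a)) s := by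
      have h := h1.pow 2; simp at h; exact h
    have h3 : HasDerivAt (fun s : ℝ => f a + deriv f a * (s - a) + mf / 2 * (s - a) ^ 2)
        (deriv f a * 1 + mf / 2 * (2 * (s - a))) s :=
      ((h1.const_mul (deriv f a)).const_add (f a)).add (h2.const_mul (mf / 2))
    have h4 : HasDerivAt ψ _ s := ((hd1 s hs).hasDerivAt).sub h3
    convert h4 using 1
    simp only [hφ]
    ring
  have hφder : ∀ s ∈ Set.Ioi (0 : ℝ), HasDerivAt φ (deriv (deriv f) s - mf) s := by
    intro s hs
    have h := ((hd2 s hs).hasDerivAt).sub ((hasDerivAt_id s).const_mul mf); simp at h; exact h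
  have hφmono : ∀ l r : ℝ, Set.Icc l r ⊆ Set.Icc ξ₁ ξ₂ ∩ Set.Ioi 0 →
      MonotoneOn φ (Set.Icc l r) := by
    intro l r hsub
    refine monotoneOn_of_deriv_nonneg (convex_Icc l r) ?_ ?_ ?_
    · intro s hs
      exact ((hφder s (hsub hs).2).continuousAt).continuousWithinAt
    · intro s hs
      exact ((hφder s (hsub (interior_subset hs)).2).differentiableAt).differentiableWithinAt
    · intro s hs
      have hs' := hsub (interior_subset hs)
      rw [(hφder s hs'.2).deriv]
      have := hf'' s hs'
      linarith
  have hψa : ψ a = 0 := by simp [hψ]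
  rcases le_total a t with hat | hta
  · have hsubat : Set.Icc a t ⊆ Set.Icc ξ₁ ξ₂ ∩ Set.Ioi 0 := by
      intro s hs
      exact ⟨⟨le_trans ha.1 hs.1, le_trans hs.2 ht.2⟩, lt_of_lt_of_le ha0 hs.1⟩
    have hmono : MonotoneOn ψ (Set.Icc a t) := by
      refine monotoneOn_of_deriv_nonneg (convex_Icc a t) ?_ ?_ ?_
      · intro s hs
        exact (hψder s (hsubat hs).2).continuousAt.continuousWithinAt
      · intro s hs
        exact (hψder s (hsubat (interior_subset hs)).2).differentiableAt.differentiableWithinAt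
      · intro s hs
        have hs' := interior_subset hs
        rw [(hψder s (hsubat hs').2).deriv, sub_nonneg]
        exact hφmono a t hsubat ⟨le_refl a, hat⟩ hs' hs'.1
    have := hmono ⟨le_refl a, hat⟩ ⟨hat, le_refl t⟩ hat
    rw [hψa] at this
    have : 0 ≤ f t - (f a + deriv f a * (t - a) + mf / 2 * (t - a) ^ 2) := this
    linarith
  · have hsubta : Set.Icc t a ⊆ Set.Icc ξ₁ ξ₂ ∩ Set.Ioi 0 := by
      intro s hs
      exact ⟨⟨le_trans ht.1 hs.1, le_trans hs.2 ha.2⟩, lt_of_lt_of_le ht0 hs.1⟩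
    have hanti : AntitoneOn ψ (Set.Icc t a) := by
      refine antitoneOn_of_deriv_nonpos (convex_Icc t a) ?_ ?_ ?_
      · intro s hs
        exact (hψder s (hsubta hs).2).continuousAt.continuousWithinAt
      · intro s hs
        exact (hψder s (hsubta (interior_subset hs)).2).differentiableAt.differentiableWithinAt
      · intro s hs
        have hs' := interior_subset hs
        rw [(hψder s (hsubta hs').2).deriv, sub_nonpos]
        exact hφmono t a hsubta hs' ⟨hta, le_refl a⟩ hs'.2
    have := hanti ⟨le_refl t, hta⟩ ⟨hta, le_refl a⟩ hta
    rw [hψa] at this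
    have : 0 ≤ f t - (f a + deriv f a * (t - a) + mf / 2 * (t - a) ^ 2) := this
    linarith

private lemma fano_tangent {f : ℝ → ℝ}
    (hf0 : Filter.Tendsto f (nhdsWithin 0 (Set.Ioi 0)) (nhds (f 0)))
    (hd1 : ∀ t ∈ Set.Ioi (0 : ℝ), DifferentiableAt ℝ f t)
    (hd2 : ∀ t ∈ Set.Ioi (0 : ℝ), DifferentiableAt ℝ (deriv f) t)
    {ξ₁ ξ₂ mf : ℝ}
    (hf'' : ∀ t ∈ Set.Icc ξ₁ ξ₂ ∩ Set.Ioi 0, mf ≤ deriv (deriv f) t)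
    {a t : ℝ} (ha : a ∈ Set.Icc ξ₁ ξ₂) (ha0 : 0 < a)
    (ht : t ∈ Set.Icc ξ₁ ξ₂) (ht0 : 0 ≤ t) :
    f a + deriv f a * (t - a) + mf / 2 * (t - a) ^ 2 ≤ f t := by
  rcases ht0.lt_or_eq with h | h
  · exact fano_tangent_pos hd1 hd2 hf'' ha ha0 ht h
  · have hξ₁0 : ξ₁ ≤ 0 := h ▸ ht.1
    have hev : ∀ᶠ s in nhdsWithin 0 (Set.Ioi 0),
        f a + deriv f a * (s - a) + mf / 2 * (s - a) ^ 2 ≤ f s := by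
      filter_upwards [Ioo_mem_nhdsGT_of_mem (⟨le_refl (0:ℝ), ha0⟩ : (0:ℝ) ∈ Set.Ico 0 a)]
        with s hs
      exact fano_tangent_pos hd1 hd2 hf'' ha ha0
        ⟨le_trans hξ₁0 hs.1.le, le_trans hs.2.le ha.2⟩ hs.1
    have hcont : Filter.Tendsto (fun s : ℝ => f a + deriv f a * (s - a) + mf / 2 * (s - a) ^ 2)
        (nhdsWithin 0 (Set.Ioi 0)) (nhds (f a + deriv f a * (0 - a) + mf / 2 * (0 - a) ^ 2)) := by
      apply Filter.Tendsto.mono_left _ nhdsWithin_le_nhds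
      exact (Continuous.tendsto (by continuity) 0)
    have := le_of_tendsto_of_tendsto hcont hf0 hev
    rw [← h]
    exact this

private lemma fano_group {X Y : Type*} [Fintype X] [Fintype Y]
    {f : ℝ → ℝ}
    (hf0 : Filter.Tendsto f (nhdsWithin 0 (Set.Ioi 0)) (nhds (f 0)))
    (hd1 : ∀ t ∈ Set.Ioi (0 : ℝ), DifferentiableAt ℝ f t)
    (hd2 : ∀ t ∈ Set.Ioi (0 : ℝ), DifferentiableAt ℝ (deriv f) t)
    {ξ₁ ξ₂ mf : ℝ}
    (hf'' : ∀ t ∈ Set.Icc ξ₁ ξ₂ ∩ Set.Ioi 0, mf ≤ deriv (deriv f) t)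
    (u : Y → ℝ) (G : Y → Finset X) (t : X → Y → ℝ)
    (hu : ∀ y, 0 ≤ u y)
    (ht : ∀ y, u y ≠ 0 → ∀ x, t x y ∈ Set.Icc ξ₁ ξ₂ ∧ 0 ≤ t x y)
    (A : ℝ) (hA : A ∈ Set.Icc ξ₁ ξ₂) (hA0 : 0 ≤ A)
    (hmean : ∑ y, u y * ∑ x ∈ G y, (t x y - A) = 0) :
    (∑ y, u y * ((G y).card : ℝ)) * f A
        + mf / 2 * ∑ y, u y * ∑ x ∈ G y, (t x y - A) ^ 2
      ≤ ∑ y, u y * ∑ x ∈ G y, f (t x y) := by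
  rcases hA0.lt_or_eq with hA0' | hA0'
  · have key : ∀ y, u y * (((G y).card : ℝ) * f A + deriv f A * (∑ x ∈ G y, (t x y - A))
        + mf / 2 * ∑ x ∈ G y, (t x y - A) ^ 2) ≤ u y * ∑ x ∈ G y, f (t x y) := by
      intro y
      rcases eq_or_ne (u y) 0 with h | h
      · simp [h]
      refine mul_le_mul_of_nonneg_left ?_ (hu y)
      have hsum : ∑ x ∈ G y, (f A + deriv f A * (t x y - A) + mf / 2 * (t x y - A) ^ 2)
          ≤ ∑ x ∈ G y, f (t x y) :=
        Finset.sum_le_sum fun x _ =>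
          fano_tangent hf0 hd1 hd2 hf'' hA hA0' (ht y h x).1 (ht y h x).2
      calc ((G y).card : ℝ) * f A + deriv f A * (∑ x ∈ G y, (t x y - A))
            + mf / 2 * ∑ x ∈ G y, (t x y - A) ^ 2
          = ∑ x ∈ G y, (f A + deriv f A * (t x y - A) + mf / 2 * (t x y - A) ^ 2) := by
            rw [Finset.sum_add_distrib, Finset.sum_add_distrib, Finset.sum_const,
              ← Finset.mul_sum, ← Finset.mul_sum, nsmul_eq_mul]
        _ ≤ _ := hsum
    have hsum := Finset.sum_le_sum (fun (y : Y) (_ : y ∈ Finset.univ) => key y)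
    have expand : ∑ y, u y * (((G y).card : ℝ) * f A + deriv f A * (∑ x ∈ G y, (t x y - A))
        + mf / 2 * ∑ x ∈ G y, (t x y - A) ^ 2)
        = (∑ y, u y * ((G y).card : ℝ)) * f A
          + deriv f A * (∑ y, u y * ∑ x ∈ G y, (t x y - A))
          + mf / 2 * ∑ y, u y * ∑ x ∈ G y, (t x y - A) ^ 2 := by
      have e : ∀ y : Y, u y * (((G y).card : ℝ) * f A + deriv f A * (∑ x ∈ G y, (t x y - A))
          + mf / 2 * ∑ x ∈ G y, (t x y - A) ^ 2)
          = (u y * ((G y).card : ℝ)) * f A + deriv f A * (u y * ∑ x ∈ G y, (t x y - A))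
            + mf / 2 * (u y * ∑ x ∈ G y, (t x y - A) ^ 2) := fun y => by ring
      rw [Finset.sum_congr rfl fun y _ => e y, Finset.sum_add_distrib, Finset.sum_add_distrib,
        ← Finset.sum_mul, ← Finset.mul_sum, ← Finset.mul_sum]
    rw [expand, hmean, mul_zero, add_zero] at hsum
    exact hsum
  · -- A = 0
    have hzero : ∀ y ∈ (Finset.univ : Finset Y), u y * ∑ x ∈ G y, (t x y - A) = 0 := by
      rw [← Finset.sum_eq_zero_iff_of_nonneg]
      · exact hmean
      · intro y _
        rcases eq_or_ne (u y) 0 with h | h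
        · simp [h]
        · exact mul_nonneg (hu y) (Finset.sum_nonneg fun x _ => by
            have := (ht y h x).2; rw [← hA0']; simpa using this)
    have hteq : ∀ y, u y ≠ 0 → ∀ x ∈ G y, t x y = A := by
      intro y hy x hx
      have h0 := hzero y (Finset.mem_univ y)
      have h1 : ∑ x ∈ G y, (t x y - A) = 0 := by
        rcases mul_eq_zero.1 h0 with h | h
        · exact absurd h hy
        · exact h
      have h2 := (Finset.sum_eq_zero_iff_of_nonneg (fun x _ => by
        have := (ht y hy x).2; rw [← hA0']; simpa using this)).1 h1 x hx
      linarith [h2]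
    have e1 : ∑ y, u y * ∑ x ∈ G y, f (t x y) = (∑ y, u y * ((G y).card : ℝ)) * f A := by
      rw [Finset.sum_mul]
      refine Finset.sum_congr rfl fun y _ => ?_
      rcases eq_or_ne (u y) 0 with h | h
      · simp [h]
      · rw [Finset.sum_congr rfl fun x hx => by rw [hteq y h x hx], Finset.sum_const,
          nsmul_eq_mul]
        ring
    have e2 : ∑ y, u y * ∑ x ∈ G y, (t x y - A) ^ 2 = 0 := by
      refine Finset.sum_eq_zero fun y _ => ?_
      rcases eq_or_ne (u y) 0 with h | h
      · simp [h]
      · rw [Finset.sum_eq_zero fun x hx => by rw [hteq y h x hx]; ring, mul_zero]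
    rw [e1, e2, mul_zero, add_zero]

/-- **Refined generalized Fano inequality for fixed-size list decoding** (strong
data-processing refinement).  `P x y` is the joint pmf `P_{XY}`, `Lst` is a fixed-size
list decoder with lists of cardinality `L`, the convex function `f` is twice
differentiable on `(0,∞)` with `f'' ≥ m_f > 0` on `[ξ₁*, ξ₂*] ∩ (0,∞)`, where
`ξ₁* = M · inf P_{X|Y}` and `ξ₂* = M · sup P_{X|Y}` (inf/sup over pairs `(x,y)` with
`P_Y(y) > 0`).  The last term involves the positive part `u⁺ = max u 0`. -/
theorem refined_generalized_fano_f_divergence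
    {X Y : Type*} [Fintype X] [Fintype Y] [DecidableEq X]
    (M L : ℕ) (hM : Fintype.card X = M) (hL1 : 1 ≤ L) (hLM : L < M)
    (P : X → Y → ℝ) (hP : ∀ x y, 0 ≤ P x y) (hPsum : ∑ x, ∑ y, P x y = 1)
    (Lst : Y → Finset X) (hLst : ∀ y, (Lst y).card = L)
    (f : ℝ → ℝ) (hf : ConvexOn ℝ (Set.Ioi 0) f) (hf1 : f 1 = 0)
    (hf0 : Filter.Tendsto f (nhdsWithin 0 (Set.Ioi 0)) (nhds (f 0)))
    (hd1 : ∀ t ∈ Set.Ioi (0 : ℝ), DifferentiableAt ℝ f t)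
    (hd2 : ∀ t ∈ Set.Ioi (0 : ℝ), DifferentiableAt ℝ (deriv f) t)
    (ξ₁ ξ₂ : ℝ)
    (hξ₁ : ξ₁ = (M : ℝ) * sInf {p : ℝ | ∃ x y, 0 < ∑ x', P x' y ∧
                    p = P x y / ∑ x', P x' y})
    (hξ₂ : ξ₂ = (M : ℝ) * sSup {p : ℝ | ∃ x y, 0 < ∑ x', P x' y ∧
                    p = P x y / ∑ x', P x' y})
    (mf : ℝ) (hmf : 0 < mf)
    (hf'' : ∀ t ∈ Set.Icc ξ₁ ξ₂ ∩ Set.Ioi 0, mf ≤ deriv (deriv f) t)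
    (PL : ℝ) (hPL : PL = ∑ y, ∑ x ∈ (Lst y)ᶜ, P x y) :
    ∑ y, (∑ x, P x y) *
        (∑ x : X, (1 / (M : ℝ)) * f ((P x y / ∑ x', P x' y) / (1 / (M : ℝ))))
      ≥ ((L : ℝ) / M) * f ((M : ℝ) * (1 - PL) / L)
        + (1 - (L : ℝ) / M) * f ((M : ℝ) * PL / ((M : ℝ) - L))
        + (1 / 2) * mf * M *
            max ((∑ y, ∑ x, P x y * (P x y / ∑ x', P x' y))
                  - (1 - PL) / L - PL / ((M : ℝ) - L)) 0 := by
  classical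
  have hMpos : (0:ℝ) < M := by
    have : 0 < M := by omega
    exact_mod_cast this
  have hMne : (M:ℝ) ≠ 0 := ne_of_gt hMpos
  have hLpos : (0:ℝ) < L := by exact_mod_cast hL1
  have hLne : (L:ℝ) ≠ 0 := ne_of_gt hLpos
  have hLM' : (L:ℝ) < M := by exact_mod_cast hLM
  have hMLpos : (0:ℝ) < (M:ℝ) - L := by linarith
  have hMLne : (M:ℝ) - (L:ℝ) ≠ 0 := ne_of_gt hMLpos
  set p : Y → ℝ := fun y => ∑ x, P x y with hpdef
  set r : X → Y → ℝ := fun x y => P x y / p y * M with hrdef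
  have hpy : ∀ y, (∑ x, P x y) = p y := fun y => by rw [hpdef]
  have hp0 : ∀ y, 0 ≤ p y := fun y => by
    rw [← hpy]; exact Finset.sum_nonneg fun x _ => hP x y
  have hpsum : ∑ y, p y = 1 := by
    simp only [← hpy]
    rw [← hPsum]; exact Finset.sum_comm
  have hPzero : ∀ y, p y = 0 → ∀ x, P x y = 0 := by
    intro y h x
    rw [← hpy] at h
    exact (Finset.sum_eq_zero_iff_of_nonneg fun x _ => hP x y).1 h x (Finset.mem_univ x)
  have hr0 : ∀ x y, 0 ≤ r x y := fun x y => by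
    rw [hrdef]; exact mul_nonneg (div_nonneg (hP x y) (hp0 y)) hMpos.le
  have hpr : ∀ x y, p y * r x y = (M:ℝ) * P x y := by
    intro x y
    rcases eq_or_ne (p y) 0 with h | h
    · rw [h, hPzero y h x]; simp
    · rw [hrdef]; field_simp
  have hpr2 : ∀ x y, p y * (r x y)^2 = (M:ℝ)^2 * (P x y * (P x y / p y)) := by
    intro x y
    rcases eq_or_ne (p y) 0 with h | h
    · rw [h, hPzero y h x]; simp
    · rw [hrdef]; field_simp
  -- rewrite the goal in terms of p and r
  simp only [hpy] at hξ₁ hξ₂ ⊢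
  have hry : ∀ (x : X) (y : Y), (P x y / p y) / (1/(M:ℝ)) = r x y := by
    intro x y
    rw [hrdef, div_div_eq_mul_div, div_one]
  simp only [hry]
  -- the set of conditional probabilities
  set SS : Set ℝ := {q : ℝ | ∃ x y, 0 < p y ∧ q = P x y / p y} with hSS
  have hSfin : SS.Finite := by
    apply (Set.finite_range (fun z : X × Y => P z.1 z.2 / p z.2)).subset
    rintro q ⟨x, y, -, rfl⟩
    exact ⟨(x, y), rfl⟩
  have hrmem : ∀ y, p y ≠ 0 → ∀ x, r x y ∈ Set.Icc ξ₁ ξ₂ := by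
    intro y hy x
    have hpyp : 0 < p y := lt_of_le_of_ne (hp0 y) (Ne.symm hy)
    have hmemS : P x y / p y ∈ SS := ⟨x, y, hpyp, rfl⟩
    have h1 : sInf SS ≤ P x y / p y := csInf_le hSfin.bddBelow hmemS
    have h2 : P x y / p y ≤ sSup SS := le_csSup hSfin.bddAbove hmemS
    constructor
    · rw [hξ₁]
      calc (M:ℝ) * sInf SS ≤ (M:ℝ) * (P x y / p y) :=
            mul_le_mul_of_nonneg_left h1 hMpos.le
        _ = r x y := by rw [hrdef]; ring
    · rw [hξ₂]
      calc r x y = (M:ℝ) * (P x y / p y) := by rw [hrdef]; ring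
        _ ≤ (M:ℝ) * sSup SS := mul_le_mul_of_nonneg_left h2 hMpos.le
  -- cardinality of complements
  have hcardc : ∀ y, (((Lst y)ᶜ).card : ℝ) = (M:ℝ) - L := by
    intro y
    rw [Finset.card_compl, hLst, hM, Nat.cast_sub hLM.le]
  -- PL facts
  have hS1 : ∑ y, ∑ x ∈ Lst y, P x y = 1 - PL := by
    have h : ∑ y, (∑ x ∈ Lst y, P x y + ∑ x ∈ (Lst y)ᶜ, P x y) = 1 := by
      rw [Finset.sum_congr rfl fun y _ => Finset.sum_add_sum_compl (Lst y) (fun x => P x y)]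
      simp only [hpy]
      exact hpsum
    rw [Finset.sum_add_distrib] at h
    rw [hPL]
    linarith
  have hPL0 : 0 ≤ PL := by
    rw [hPL]
    exact Finset.sum_nonneg fun y _ => Finset.sum_nonneg fun x _ => hP x y
  have hPL1 : PL ≤ 1 := by
    have : 0 ≤ ∑ y, ∑ x ∈ Lst y, P x y :=
      Finset.sum_nonneg fun y _ => Finset.sum_nonneg fun x _ => hP x y
    linarith [hS1]
  -- the two "centroids"
  set A : ℝ := (M:ℝ) * (1 - PL) / L with hAdef
  set B : ℝ := (M:ℝ) * PL / ((M:ℝ) - L) with hBdef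
  have hLA : (L:ℝ) * A = (M:ℝ) * (1 - PL) := by rw [hAdef]; field_simp
  have hMB : ((M:ℝ) - L) * B = (M:ℝ) * PL := by rw [hBdef]; field_simp
  have hA0 : 0 ≤ A := by
    rw [hAdef]
    exact div_nonneg (mul_nonneg hMpos.le (by linarith)) hLpos.le
  have hB0 : 0 ≤ B := by
    rw [hBdef]
    exact div_nonneg (mul_nonneg hMpos.le hPL0) hMLpos.le
  -- weighted sums of p * r
  have hsumpr_in : ∑ y, ∑ x ∈ Lst y, p y * r x y = (M:ℝ) * (1 - PL) := by
    simp only [hpr, ← Finset.mul_sum]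
    rw [hS1]
  have hsumpr_out : ∑ y, ∑ x ∈ (Lst y)ᶜ, p y * r x y = (M:ℝ) * PL := by
    simp only [hpr, ← Finset.mul_sum]
    rw [← hPL]
  -- centroids lie in [ξ₁, ξ₂]
  have hmemIcc : ∀ (G : Y → Finset X) (c C : ℝ), 0 < c → (∀ y, ((G y).card : ℝ) = c) →
      c * C = ∑ y, ∑ x ∈ G y, p y * r x y → C ∈ Set.Icc ξ₁ ξ₂ := by
    intro G c C hc hcard hC
    have hlow : ∀ y, p y * (c * ξ₁) ≤ ∑ x ∈ G y, p y * r x y := by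
      intro y
      rcases eq_or_ne (p y) 0 with h | h
      · simp [h]
      · calc p y * (c * ξ₁) = ∑ x ∈ G y, p y * ξ₁ := by
              rw [Finset.sum_const, nsmul_eq_mul, hcard]; ring
          _ ≤ _ := Finset.sum_le_sum fun x _ =>
              mul_le_mul_of_nonneg_left ((hrmem y h x).1) (hp0 y)
    have hhigh : ∀ y, ∑ x ∈ G y, p y * r x y ≤ p y * (c * ξ₂) := by
      intro y
      rcases eq_or_ne (p y) 0 with h | h
      · simp [h]
      · calc ∑ x ∈ G y, p y * r x y ≤ ∑ x ∈ G y, p y * ξ₂ :=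
              Finset.sum_le_sum fun x _ =>
                mul_le_mul_of_nonneg_left ((hrmem y h x).2) (hp0 y)
          _ = p y * (c * ξ₂) := by rw [Finset.sum_const, nsmul_eq_mul, hcard]; ring
    constructor
    · have h1 := Finset.sum_le_sum fun (y : Y) (_ : y ∈ Finset.univ) => hlow y
      rw [← Finset.sum_mul, hpsum, one_mul, ← hC] at h1
      exact (mul_le_mul_iff_right₀ hc).1 h1
    · have h1 := Finset.sum_le_sum fun (y : Y) (_ : y ∈ Finset.univ) => hhigh y
      rw [← Finset.sum_mul, hpsum, one_mul, ← hC] at h1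
      exact (mul_le_mul_iff_right₀ hc).1 h1
  have hAmem : A ∈ Set.Icc ξ₁ ξ₂ :=
    hmemIcc Lst (L:ℝ) A hLpos (fun y => by rw [hLst]) (by rw [hLA, ← hsumpr_in])
  have hBmem : B ∈ Set.Icc ξ₁ ξ₂ :=
    hmemIcc (fun y => (Lst y)ᶜ) ((M:ℝ) - L) B hMLpos hcardc (by rw [hMB, ← hsumpr_out])
  -- zero-mean conditions
  have hmean : ∀ (G : Y → Finset X) (c C : ℝ), (∀ y, ((G y).card : ℝ) = c) →
      c * C = ∑ y, ∑ x ∈ G y, p y * r x y →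
      ∑ y, p y * ∑ x ∈ G y, (r x y - C) = 0 := by
    intro G c C hcard hC
    have e : ∀ y, p y * ∑ x ∈ G y, (r x y - C)
        = (∑ x ∈ G y, p y * r x y) - p y * (c * C) := by
      intro y
      calc p y * ∑ x ∈ G y, (r x y - C)
          = ∑ x ∈ G y, (p y * r x y - p y * C) := by
            rw [Finset.mul_sum]; exact Finset.sum_congr rfl fun x _ => by ring
        _ = (∑ x ∈ G y, p y * r x y) - ∑ x ∈ G y, p y * C := Finset.sum_sub_distrib _ _
        _ = (∑ x ∈ G y, p y * r x y) - p y * (c * C) := by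
            rw [Finset.sum_const, nsmul_eq_mul, hcard]; ring
    rw [Finset.sum_congr rfl fun y _ => e y, Finset.sum_sub_distrib,
      ← Finset.sum_mul, hpsum, one_mul, ← hC, sub_self]
  -- second-moment identities
  have hQ : ∀ (G : Y → Finset X) (c C : ℝ), (∀ y, ((G y).card : ℝ) = c) →
      c * C = ∑ y, ∑ x ∈ G y, p y * r x y →
      ∑ y, p y * ∑ x ∈ G y, (r x y - C) ^ 2
        = (M:ℝ)^2 * (∑ y, ∑ x ∈ G y, P x y * (P x y / p y)) - c * C^2 := by
    intro G c C hcard hC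
    have e : ∀ y, p y * ∑ x ∈ G y, (r x y - C)^2
        = (M:ℝ)^2 * (∑ x ∈ G y, P x y * (P x y / p y))
          - 2*C*(∑ x ∈ G y, p y * r x y) + p y * (c * C^2) := by
      intro y
      calc p y * ∑ x ∈ G y, (r x y - C)^2
          = ∑ x ∈ G y, (p y * (r x y)^2 - 2*C*(p y * r x y) + p y * C^2) := by
            rw [Finset.mul_sum]; exact Finset.sum_congr rfl fun x _ => by ring
        _ = ∑ x ∈ G y, ((M:ℝ)^2 * (P x y * (P x y / p y)) - 2*C*(p y * r x y) + p y * C^2) :=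
            Finset.sum_congr rfl fun x _ => by rw [hpr2]
        _ = _ := by
            rw [Finset.sum_add_distrib, Finset.sum_sub_distrib, ← Finset.mul_sum,
              ← Finset.mul_sum, Finset.sum_const, nsmul_eq_mul, hcard]
            ring
    rw [Finset.sum_congr rfl fun y _ => e y, Finset.sum_add_distrib, Finset.sum_sub_distrib,
      ← Finset.mul_sum, ← Finset.mul_sum, ← Finset.sum_mul, hpsum, one_mul, ← hC]
    ring
  -- instantiate
  have hcardL : ∀ y, (((Lst y)).card : ℝ) = (L:ℝ) := fun y => by rw [hLst]
  have hCin : (L:ℝ) * A = ∑ y, ∑ x ∈ Lst y, p y * r x y := by rw [hLA, ← hsumpr_in]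
  have hCout : ((M:ℝ) - L) * B = ∑ y, ∑ x ∈ (Lst y)ᶜ, p y * r x y := by
    rw [hMB, ← hsumpr_out]
  have hmeanIn := hmean Lst (L:ℝ) A hcardL hCin
  have hmeanOut := hmean (fun y => (Lst y)ᶜ) ((M:ℝ) - L) B hcardc hCout
  have hQinEq := hQ Lst (L:ℝ) A hcardL hCin
  have hQoutEq := hQ (fun y => (Lst y)ᶜ) ((M:ℝ) - L) B hcardc hCout
  have hEsplit : (∑ y, ∑ x ∈ Lst y, P x y * (P x y / p y))
      + (∑ y, ∑ x ∈ (Lst y)ᶜ, P x y * (P x y / p y))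
      = ∑ y, ∑ x, P x y * (P x y / p y) := by
    rw [← Finset.sum_add_distrib]
    exact Finset.sum_congr rfl fun y _ => Finset.sum_add_sum_compl _ _
  have hQin0 : 0 ≤ ∑ y, p y * ∑ x ∈ Lst y, (r x y - A) ^ 2 :=
    Finset.sum_nonneg fun y _ =>
      mul_nonneg (hp0 y) (Finset.sum_nonneg fun x _ => sq_nonneg _)
  have hQout0 : 0 ≤ ∑ y, p y * ∑ x ∈ (Lst y)ᶜ, (r x y - B) ^ 2 :=
    Finset.sum_nonneg fun y _ =>
      mul_nonneg (hp0 y) (Finset.sum_nonneg fun x _ => sq_nonneg _)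
  have hrIcc : ∀ y, p y ≠ 0 → ∀ x, r x y ∈ Set.Icc ξ₁ ξ₂ ∧ 0 ≤ r x y :=
    fun y hy x => ⟨hrmem y hy x, hr0 x y⟩
  have hIn := fano_group hf0 hd1 hd2 hf'' p Lst r hp0 hrIcc A hAmem hA0 hmeanIn
  have hOut := fano_group hf0 hd1 hd2 hf'' p (fun y => (Lst y)ᶜ) r hp0 hrIcc B hBmem hB0 hmeanOut
  have hucard_in : ∑ y, p y * (((Lst y)).card : ℝ) = (L:ℝ) := by
    simp only [hcardL]
    rw [← Finset.sum_mul, hpsum, one_mul]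
  have hucard_out : ∑ y, p y * ((((Lst y)ᶜ)).card : ℝ) = (M:ℝ) - L := by
    simp only [hcardc]
    rw [← Finset.sum_mul, hpsum, one_mul]
  rw [hucard_in] at hIn
  rw [hucard_out] at hOut
  -- rewrite the goal left side
  have hLHSeq : ∑ y, p y * (∑ x, (1/(M:ℝ)) * f (r x y))
      = (1/(M:ℝ)) * ((∑ y, p y * ∑ x ∈ Lst y, f (r x y))
          + (∑ y, p y * ∑ x ∈ (Lst y)ᶜ, f (r x y))) := by
    calc ∑ y, p y * (∑ x, (1/(M:ℝ)) * f (r x y))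
        = ∑ y, (1/(M:ℝ)) * (p y * ∑ x ∈ Lst y, f (r x y)
            + p y * ∑ x ∈ (Lst y)ᶜ, f (r x y)) := by
          refine Finset.sum_congr rfl fun y _ => ?_
          rw [← Finset.mul_sum, ← Finset.sum_add_sum_compl (Lst y) (fun x => f (r x y))]
          ring
      _ = _ := by rw [← Finset.mul_sum, Finset.sum_add_distrib]
  -- quadratic lower bounds
  have hb1 : (L:ℝ) * A^2 ≤ (M:ℝ)^2 * ((1 - PL)/L) := by
    have hsq : (1 - PL)^2 ≤ 1 - PL := by
      have h := mul_nonneg (show (0:ℝ) ≤ 1 - PL by linarith) hPL0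
      have e : (1 - PL) - (1 - PL)^2 = (1 - PL) * PL := by ring
      linarith
    have key : ((L:ℝ) * A^2) * L ≤ ((M:ℝ)^2 * ((1 - PL)/L)) * L := by
      have e1 : ((L:ℝ) * A^2) * L = ((L:ℝ) * A)^2 := by ring
      have e2 : ((M:ℝ)^2 * ((1 - PL)/L)) * L = (M:ℝ)^2 * (1 - PL) := by
        field_simp
      rw [e1, e2, hLA]
      have h := mul_le_mul_of_nonneg_left hsq (sq_nonneg (M:ℝ))
      have e : ((M:ℝ) * (1 - PL))^2 = (M:ℝ)^2 * (1 - PL)^2 := by ring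
      linarith
    exact le_of_mul_le_mul_right key hLpos
  have hb2 : ((M:ℝ) - L) * B^2 ≤ (M:ℝ)^2 * (PL/((M:ℝ) - L)) := by
    have hsq : PL^2 ≤ PL := by
      have h := mul_nonneg hPL0 (show (0:ℝ) ≤ 1 - PL by linarith)
      have e : PL - PL^2 = PL * (1 - PL) := by ring
      linarith
    have key : (((M:ℝ) - L) * B^2) * ((M:ℝ) - L) ≤ ((M:ℝ)^2 * (PL/((M:ℝ) - L))) * ((M:ℝ) - L) := by
      have e1 : (((M:ℝ) - L) * B^2) * ((M:ℝ) - L) = (((M:ℝ) - L) * B)^2 := by ring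
      have e2 : ((M:ℝ)^2 * (PL/((M:ℝ) - L))) * ((M:ℝ) - L) = (M:ℝ)^2 * PL := by
        field_simp
      rw [e1, e2, hMB]
      have h := mul_le_mul_of_nonneg_left hsq (sq_nonneg (M:ℝ))
      have e : ((M:ℝ) * PL)^2 = (M:ℝ)^2 * PL^2 := by ring
      linarith
    exact le_of_mul_le_mul_right key hMLpos
  have hQsum : (∑ y, p y * ∑ x ∈ Lst y, (r x y - A) ^ 2)
      + (∑ y, p y * ∑ x ∈ (Lst y)ᶜ, (r x y - B) ^ 2)
      = (M:ℝ)^2 * (∑ y, ∑ x, P x y * (P x y / p y)) - (L:ℝ)*A^2 - ((M:ℝ) - L)*B^2 := by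
    rw [hQinEq, hQoutEq, ← hEsplit]
    ring
  have hmaxb : (M:ℝ)^2 * max ((∑ y, ∑ x, P x y * (P x y / p y))
        - (1 - PL)/L - PL/((M:ℝ) - L)) 0
      ≤ (∑ y, p y * ∑ x ∈ Lst y, (r x y - A) ^ 2)
        + (∑ y, p y * ∑ x ∈ (Lst y)ᶜ, (r x y - B) ^ 2) := by
    rcases le_total ((∑ y, ∑ x, P x y * (P x y / p y))
        - (1 - PL)/L - PL/((M:ℝ) - L)) 0 with h | h
    · rw [max_eq_right h, mul_zero]
      linarith
    · rw [max_eq_left h, hQsum]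
      have expand : (M:ℝ)^2 * ((∑ y, ∑ x, P x y * (P x y / p y))
          - (1 - PL)/L - PL/((M:ℝ) - L))
          = (M:ℝ)^2 * (∑ y, ∑ x, P x y * (P x y / p y))
            - (M:ℝ)^2 * ((1 - PL)/L) - (M:ℝ)^2 * (PL/((M:ℝ) - L)) := by ring
      rw [expand]
      linarith
  rw [ge_iff_le, hLHSeq]
  have hm : mf/2 * ((M:ℝ)^2 * max ((∑ y, ∑ x, P x y * (P x y / p y))
        - (1 - PL)/L - PL/((M:ℝ) - L)) 0)
      ≤ mf/2 * (∑ y, p y * ∑ x ∈ Lst y, (r x y - A) ^ 2)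
        + mf/2 * (∑ y, p y * ∑ x ∈ (Lst y)ᶜ, (r x y - B) ^ 2) := by
    have h1 := mul_le_mul_of_nonneg_left hmaxb (le_of_lt (half_pos hmf))
    have h2 : mf/2 * ((∑ y, p y * ∑ x ∈ Lst y, (r x y - A) ^ 2)
        + (∑ y, p y * ∑ x ∈ (Lst y)ᶜ, (r x y - B) ^ 2))
        = mf/2 * (∑ y, p y * ∑ x ∈ Lst y, (r x y - A) ^ 2)
          + mf/2 * (∑ y, p y * ∑ x ∈ (Lst y)ᶜ, (r x y - B) ^ 2) := by ring
    linarith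
  calc (L:ℝ)/M * f A + (1 - (L:ℝ)/M) * f B
        + 1/2 * mf * (M:ℝ) * max ((∑ y, ∑ x, P x y * (P x y / p y))
            - (1 - PL)/L - PL/((M:ℝ) - L)) 0
      = (1/(M:ℝ)) * ((L:ℝ) * f A + ((M:ℝ) - L) * f B
          + mf/2 * ((M:ℝ)^2 * max ((∑ y, ∑ x, P x y * (P x y / p y))
              - (1 - PL)/L - PL/((M:ℝ) - L)) 0)) := by
        have habc : ∀ a b c : ℝ, (L:ℝ)/M * a + (1 - (L:ℝ)/M) * b + 1/2 * mf * (M:ℝ) * c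
            = (1/(M:ℝ)) * ((L:ℝ) * a + ((M:ℝ) - L) * b + mf/2 * ((M:ℝ)^2 * c)) := by
          intro a b c
          field_simp
        exact habc _ _ _
    _ ≤ (1/(M:ℝ)) * ((∑ y, p y * ∑ x ∈ Lst y, f (r x y))
          + (∑ y, p y * ∑ x ∈ (Lst y)ᶜ, f (r x y))) := by
        apply mul_le_mul_of_nonneg_left _ (by positivity)
        linarith
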